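/- Let n ≥ 1 and let X_goal be an n×n complex unitary matrix with det(I + X_goal) ≠ 0. Then the sublevel set K = {X̃ ∈ W : V(X̃) ≤ V(X_goal)} is a compact subset of the space of n×n complex matrices (with the Frobenius norm topology), and K is contained in W. -/

import Mathlib

open Matrix

/-- The Lyapunov function `V(X̃) = -Tr ((X̃ - I)² (X̃ + I)⁻²)` (its value is real for unitary
`X̃` with no eigenvalue `-1`; we take the real part). -/
noncomputable def lyapV {n : ℕ} (X : Matrix (Fin n) (Fin n) ℂ) : ℝ :=
  (-(((X - 1) * (X - 1)) * ((X + 1)⁻¹ * (X + 1)⁻¹)).trace).re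

namespace SublevelAux

variable {n : ℕ}

/-- squared Frobenius norm -/
noncomputable def frobSq (A : Matrix (Fin n) (Fin n) ℂ) : ℝ :=
  ∑ i, ∑ j, Complex.normSq (A j i)

lemma frobSq_nonneg (A : Matrix (Fin n) (Fin n) ℂ) : 0 ≤ frobSq A :=
  Finset.sum_nonneg fun _ _ => Finset.sum_nonneg fun _ _ => Complex.normSq_nonneg _

lemma star_mul_self_re (z : ℂ) : (star z * z).re = Complex.normSq z := by
  simp [Complex.mul_re, Complex.normSq_apply]

lemma trace_re_eq_frobSq (A : Matrix (Fin n) (Fin n) ℂ) :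
    ((Aᴴ * A).trace).re = frobSq A := by
  simp only [Matrix.trace, Matrix.diag, Matrix.mul_apply, Matrix.conjTranspose_apply,
    frobSq, Complex.re_sum]
  exact Finset.sum_congr rfl fun i _ => Finset.sum_congr rfl fun j _ =>
    star_mul_self_re (A j i)

lemma continuous_frobSq : Continuous (frobSq (n := n)) := by
  refine continuous_finset_sum _ fun i _ => continuous_finset_sum _ fun j _ => ?_
  exact Complex.continuous_normSq.comp ((continuous_apply i).comp (continuous_apply j))

/-- skew-Hermitian matrices have `1 - A` invertible -/
lemma isUnit_one_sub_det {A : Matrix (Fin n) (Fin n) ℂ} (hA : Aᴴ = -A) :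
    IsUnit (1 - A).det := by
  rw [isUnit_iff_ne_zero]
  intro h0
  obtain ⟨v, hv, hveq⟩ := (Matrix.exists_mulVec_eq_zero_iff).2 h0
  have hAv : A *ᵥ v = v := by
    rw [Matrix.sub_mulVec, Matrix.one_mulVec, sub_eq_zero] at hveq
    exact hveq.symm
  set c : ℂ := star v ⬝ᵥ v with hc
  have h2 : star c = -c := by
    calc star c = star (star v ⬝ᵥ (A *ᵥ v)) := by rw [hAv]
      _ = star (A *ᵥ v) ⬝ᵥ v := by rw [Matrix.star_dotProduct, star_star]
      _ = (star v ᵥ* Aᴴ) ⬝ᵥ v := by rw [Matrix.star_mulVec]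
      _ = -((star v ᵥ* A) ⬝ᵥ v) := by rw [hA, Matrix.vecMul_neg, neg_dotProduct]
      _ = -(star v ⬝ᵥ (A *ᵥ v)) := by rw [Matrix.dotProduct_mulVec]
      _ = -c := by rw [hAv]
  have hre : c.re = ∑ i, Complex.normSq (v i) := by
    simp only [hc, dotProduct, Complex.re_sum, Pi.star_apply]
    exact Finset.sum_congr rfl fun i _ => star_mul_self_re (v i)
  have hre0 : c.re = 0 := by
    have := congrArg Complex.re h2
    simp only [Complex.neg_re] at this
    have hsr : (star c).re = c.re := Complex.conj_re c
    linarith [hsr ▸ this]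
  have : ∀ i ∈ Finset.univ, Complex.normSq (v i) = 0 := by
    rw [hre] at hre0
    exact (Finset.sum_eq_zero_iff_of_nonneg fun i _ => Complex.normSq_nonneg _).1 hre0
  apply hv
  funext i
  exact Complex.normSq_eq_zero.1 (this i (Finset.mem_univ i))

/-- forward Cayley transform -/
noncomputable def cayA (X : Matrix (Fin n) (Fin n) ℂ) : Matrix (Fin n) (Fin n) ℂ :=
  (X - 1) * (X + 1)⁻¹

/-- backward Cayley transform -/
noncomputable def cayC (A : Matrix (Fin n) (Fin n) ℂ) : Matrix (Fin n) (Fin n) ℂ :=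
  (1 + A) * (1 - A)⁻¹

section algebra

variable {X A : Matrix (Fin n) (Fin n) ℂ}

lemma comm_inv (h : IsUnit (X + 1).det) :
    (X + 1)⁻¹ * (X - 1) = (X - 1) * (X + 1)⁻¹ := by
  have h1 : (X + 1) * (X + 1)⁻¹ = 1 := Matrix.mul_nonsing_inv _ h
  have h2 : (X + 1)⁻¹ * (X + 1) = 1 := Matrix.nonsing_inv_mul _ h
  have hc : (X - 1) * (X + 1) = (X + 1) * (X - 1) := by noncomm_ring
  calc (X + 1)⁻¹ * (X - 1)
      = (X + 1)⁻¹ * (X - 1) * ((X + 1) * (X + 1)⁻¹) := by rw [h1, mul_one]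
    _ = (X + 1)⁻¹ * ((X - 1) * (X + 1)) * (X + 1)⁻¹ := by
        simp only [mul_assoc]
    _ = (X + 1)⁻¹ * ((X + 1) * (X - 1)) * (X + 1)⁻¹ := by rw [hc]
    _ = ((X + 1)⁻¹ * (X + 1)) * ((X - 1) * (X + 1)⁻¹) := by simp only [mul_assoc]
    _ = (X - 1) * (X + 1)⁻¹ := by rw [h2, one_mul]

lemma one_sub_cayA (h : IsUnit (X + 1).det) :
    1 - cayA X = (2 : ℂ) • (X + 1)⁻¹ := by
  have h1 : (X + 1) * (X + 1)⁻¹ = 1 := Matrix.mul_nonsing_inv _ h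
  have key : (X + 1) * (X + 1)⁻¹ - (X - 1) * (X + 1)⁻¹ = (2 : ℂ) • (X + 1)⁻¹ := by
    rw [← Matrix.sub_mul]
    have : X + 1 - (X - 1) = (2 : ℂ) • 1 := by
      rw [two_smul]; noncomm_ring
    rw [this, smul_mul_assoc, one_mul]
  rw [cayA, ← key, h1]

lemma one_sub_cayA_mul (h : IsUnit (X + 1).det) :
    (1 - cayA X) * ((2 : ℂ)⁻¹ • (X + 1)) = 1 := by
  have h2 : (X + 1)⁻¹ * (X + 1) = 1 := Matrix.nonsing_inv_mul _ h
  rw [one_sub_cayA h, smul_mul_assoc, mul_smul_comm, smul_smul, h2]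
  norm_num

lemma isUnit_one_sub_cayA (h : IsUnit (X + 1).det) : IsUnit (1 - cayA X).det :=
  Matrix.isUnit_det_of_right_inverse (one_sub_cayA_mul h)

lemma one_sub_cayA_inv (h : IsUnit (X + 1).det) :
    (1 - cayA X)⁻¹ = (2 : ℂ)⁻¹ • (X + 1) :=
  Matrix.inv_eq_right_inv (one_sub_cayA_mul h)

lemma one_add_cayA (h : IsUnit (X + 1).det) :
    1 + cayA X = (2 : ℂ) • (X * (X + 1)⁻¹) := by
  have h1 : (X + 1) * (X + 1)⁻¹ = 1 := Matrix.mul_nonsing_inv _ h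
  have key : (X + 1) * (X + 1)⁻¹ + (X - 1) * (X + 1)⁻¹ = (2 : ℂ) • (X * (X + 1)⁻¹) := by
    rw [← Matrix.add_mul]
    have : X + 1 + (X - 1) = (2 : ℂ) • X := by
      rw [two_smul]; noncomm_ring
    rw [this, smul_mul_assoc]
  rw [cayA, ← key, h1]

/-- `C (A X) = X` -/
lemma cayC_cayA (h : IsUnit (X + 1).det) : cayC (cayA X) = X := by
  rw [cayC, one_sub_cayA_inv h, one_add_cayA h]
  have h2 : (X + 1)⁻¹ * (X + 1) = 1 := Matrix.nonsing_inv_mul _ h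
  rw [smul_mul_assoc, mul_smul_comm, smul_smul, mul_assoc, h2, mul_one]
  norm_num


lemma inv_comm {B C : Matrix (Fin n) (Fin n) ℂ} (hBC : B * C = C * B)
    (h : IsUnit B.det) : B⁻¹ * C = C * B⁻¹ := by
  have h1 : B * B⁻¹ = 1 := Matrix.mul_nonsing_inv _ h
  have h2 : B⁻¹ * B = 1 := Matrix.nonsing_inv_mul _ h
  calc B⁻¹ * C = B⁻¹ * C * (B * B⁻¹) := by rw [h1, mul_one]
    _ = B⁻¹ * (C * B) * B⁻¹ := by simp only [mul_assoc]
    _ = B⁻¹ * (B * C) * B⁻¹ := by rw [hBC]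
    _ = (B⁻¹ * B) * (C * B⁻¹) := by simp only [mul_assoc]
    _ = C * B⁻¹ := by rw [h2, one_mul]

lemma cayA_skew (hX : Xᴴ * X = 1) (hX' : X * Xᴴ = 1) (h : IsUnit (X + 1).det) :
    (cayA X)ᴴ = -(cayA X) := by
  have hXinv : (Xᴴ)⁻¹ = X := Matrix.inv_eq_right_inv hX
  have hfac : Xᴴ + 1 = Xᴴ * (X + 1) := by
    rw [mul_add, mul_one, hX, add_comm]
  have hinv : (Xᴴ + 1)⁻¹ = (X + 1)⁻¹ * X := by
    rw [hfac, Matrix.mul_inv_rev, hXinv]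
  have hfac2 : Xᴴ - 1 = Xᴴ * (1 - X) := by
    rw [mul_sub, mul_one, hX]
  calc (cayA X)ᴴ = ((X + 1)⁻¹)ᴴ * (X - 1)ᴴ := by rw [cayA, Matrix.conjTranspose_mul]
    _ = ((X + 1)ᴴ)⁻¹ * (Xᴴ - 1) := by
        rw [Matrix.conjTranspose_nonsing_inv, Matrix.conjTranspose_sub,
          Matrix.conjTranspose_one]
    _ = (Xᴴ + 1)⁻¹ * (Xᴴ - 1) := by
        rw [Matrix.conjTranspose_add, Matrix.conjTranspose_one]
    _ = (X + 1)⁻¹ * X * (Xᴴ * (1 - X)) := by rw [hinv, hfac2]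
    _ = (X + 1)⁻¹ * ((X * Xᴴ) * (1 - X)) := by simp only [mul_assoc]
    _ = (X + 1)⁻¹ * (1 - X) := by rw [hX', one_mul]
    _ = -((X + 1)⁻¹ * (X - 1)) := by rw [← neg_sub X 1, mul_neg]
    _ = -(cayA X) := by rw [inv_comm (by noncomm_ring) h, cayA]

lemma lyapV_eq_frobSq (hskew : (cayA X)ᴴ = -(cayA X)) (h : IsUnit (X + 1).det) :
    lyapV X = frobSq (cayA X) := by
  have key : (X - 1) * (X - 1) * ((X + 1)⁻¹ * (X + 1)⁻¹) = cayA X * cayA X := by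
    calc (X - 1) * (X - 1) * ((X + 1)⁻¹ * (X + 1)⁻¹)
        = (X - 1) * ((X - 1) * (X + 1)⁻¹) * (X + 1)⁻¹ := by simp only [mul_assoc]
      _ = (X - 1) * ((X + 1)⁻¹ * (X - 1)) * (X + 1)⁻¹ := by
          rw [inv_comm (by noncomm_ring) h]
      _ = cayA X * cayA X := by rw [cayA]; simp only [mul_assoc]
  have key2 : (cayA X)ᴴ * cayA X = -((cayA X) * cayA X) := by
    rw [hskew, neg_mul]
  rw [lyapV, key, ← trace_re_eq_frobSq, key2, Matrix.trace_neg]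

section skew

variable (hA : Aᴴ = -A)
include hA

lemma isUnit_one_add_det : IsUnit (1 + A).det := by
  have hA' : (-A)ᴴ = -(-A) := by rw [Matrix.conjTranspose_neg, hA, neg_neg]
  have := isUnit_one_sub_det hA'
  rwa [sub_neg_eq_add] at this

lemma cayC_unitary : (cayC A)ᴴ * cayC A = 1 := by
  have hu1 : IsUnit (1 - A).det := isUnit_one_sub_det hA
  have hu2 : IsUnit (1 + A).det := isUnit_one_add_det hA
  have hXH : (cayC A)ᴴ = (1 + A)⁻¹ * (1 - A) := by
    rw [cayC, Matrix.conjTranspose_mul, Matrix.conjTranspose_nonsing_inv,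
      Matrix.conjTranspose_sub, Matrix.conjTranspose_add, Matrix.conjTranspose_one, hA,
      sub_neg_eq_add, ← sub_eq_add_neg]
  rw [hXH, cayC]
  calc (1 + A)⁻¹ * (1 - A) * ((1 + A) * (1 - A)⁻¹)
      = (1 + A)⁻¹ * ((1 - A) * (1 + A)) * (1 - A)⁻¹ := by simp only [mul_assoc]
    _ = (1 + A)⁻¹ * ((1 + A) * (1 - A)) * (1 - A)⁻¹ := by
        rw [show (1 - A) * (1 + A) = (1 + A) * (1 - A) by noncomm_ring]
    _ = ((1 + A)⁻¹ * (1 + A)) * ((1 - A) * (1 - A)⁻¹) := by simp only [mul_assoc]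
    _ = 1 := by
        rw [Matrix.nonsing_inv_mul _ hu2, Matrix.mul_nonsing_inv _ hu1, one_mul]

lemma one_add_cayC : 1 + cayC A = (2 : ℂ) • (1 - A)⁻¹ := by
  have hu1 : IsUnit (1 - A).det := isUnit_one_sub_det hA
  have h1 : (1 - A) * (1 - A)⁻¹ = 1 := Matrix.mul_nonsing_inv _ hu1
  calc 1 + cayC A = (1 - A) * (1 - A)⁻¹ + (1 + A) * (1 - A)⁻¹ := by rw [h1, cayC]
    _ = ((1 - A) + (1 + A)) * (1 - A)⁻¹ := by rw [← Matrix.add_mul]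
    _ = (2 : ℂ) • (1 - A)⁻¹ := by
        rw [show (1 - A) + (1 + A) = ((2 : ℂ) • 1 : Matrix (Fin n) (Fin n) ℂ) by
          rw [two_smul]; noncomm_ring, smul_mul_assoc, one_mul]

lemma one_add_cayC_mul : (1 + cayC A) * ((2 : ℂ)⁻¹ • (1 - A)) = 1 := by
  have hu1 : IsUnit (1 - A).det := isUnit_one_sub_det hA
  rw [one_add_cayC hA, smul_mul_assoc, mul_smul_comm, smul_smul,
    Matrix.nonsing_inv_mul _ hu1]
  norm_num

lemma isUnit_one_add_cayC : IsUnit (1 + cayC A).det :=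
  Matrix.isUnit_det_of_right_inverse (one_add_cayC_mul hA)

lemma cayA_cayC : cayA (cayC A) = A := by
  have hu1 : IsUnit (1 - A).det := isUnit_one_sub_det hA
  have h1 : (1 - A) * (1 - A)⁻¹ = 1 := Matrix.mul_nonsing_inv _ hu1
  have hsub : cayC A - 1 = (2 : ℂ) • (A * (1 - A)⁻¹) := by
    calc cayC A - 1 = (1 + A) * (1 - A)⁻¹ - (1 - A) * (1 - A)⁻¹ := by rw [h1, cayC]
      _ = ((1 + A) - (1 - A)) * (1 - A)⁻¹ := by rw [← Matrix.sub_mul]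
      _ = (2 : ℂ) • (A * (1 - A)⁻¹) := by
          rw [show (1 + A) - (1 - A) = ((2 : ℂ) • A : Matrix (Fin n) (Fin n) ℂ) by
            rw [two_smul]; noncomm_ring, smul_mul_assoc]
  have hinv : (cayC A + 1)⁻¹ = (2 : ℂ)⁻¹ • (1 - A) := by
    apply Matrix.inv_eq_right_inv
    rw [add_comm]
    exact one_add_cayC_mul hA
  rw [cayA, hsub, hinv, smul_mul_assoc, mul_smul_comm, smul_smul, mul_assoc,
    Matrix.nonsing_inv_mul _ hu1, mul_one]
  norm_num

end skew

end algebra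


end SublevelAux

theorem sublevel_set_compact (n : ℕ) (hn : 1 ≤ n)
    (Xgoal : Matrix (Fin n) (Fin n) ℂ)
    (hXgoal : Xgoal ∈ Matrix.unitaryGroup (Fin n) ℂ)
    (hdet : (1 + Xgoal).det ≠ 0)
    (K : Set (Matrix (Fin n) (Fin n) ℂ))
    (hK : K = {X | X ∈ Matrix.unitaryGroup (Fin n) ℂ ∧ (1 + X).det ≠ 0 ∧
                   lyapV X ≤ lyapV Xgoal}) :
    IsCompact K ∧
    K ⊆ {X | X ∈ Matrix.unitaryGroup (Fin n) ℂ ∧ (1 + X).det ≠ 0} := by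
  classical
  subst hK
  constructor
  swap
  · intro X hX
    exact ⟨hX.1, hX.2.1⟩
  -- the sublevel set is the image of a compact set of skew-Hermitian matrices
  set c : ℝ := lyapV Xgoal with hc
  set S : Set (Matrix (Fin n) (Fin n) ℂ) :=
    {A | Aᴴ = -A ∧ SublevelAux.frobSq A ≤ c} with hS
  have hKey : {X | X ∈ Matrix.unitaryGroup (Fin n) ℂ ∧ (1 + X).det ≠ 0 ∧
      lyapV X ≤ lyapV Xgoal} = SublevelAux.cayC '' S := by
    ext X
    constructor
    · rintro ⟨hXu, hXd, hXl⟩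
      have hu : IsUnit (X + 1).det := by
        rw [add_comm]; exact isUnit_iff_ne_zero.2 hXd
      have hskew : (SublevelAux.cayA X)ᴴ = -(SublevelAux.cayA X) :=
        SublevelAux.cayA_skew (Matrix.mem_unitaryGroup_iff'.1 hXu)
          (Matrix.mem_unitaryGroup_iff.1 hXu) hu
      refine ⟨SublevelAux.cayA X, ⟨hskew, ?_⟩, SublevelAux.cayC_cayA hu⟩
      rw [← SublevelAux.lyapV_eq_frobSq hskew hu]
      exact hXl
    · rintro ⟨A, ⟨hAs, hAl⟩, rfl⟩
      have hXu : SublevelAux.cayC A ∈ Matrix.unitaryGroup (Fin n) ℂ :=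
        Matrix.mem_unitaryGroup_iff'.2 (SublevelAux.cayC_unitary hAs)
      have hXd : IsUnit (1 + SublevelAux.cayC A).det :=
        SublevelAux.isUnit_one_add_cayC hAs
      have hu : IsUnit (SublevelAux.cayC A + 1).det := by rw [add_comm]; exact hXd
      have hskew : (SublevelAux.cayA (SublevelAux.cayC A))ᴴ
          = -(SublevelAux.cayA (SublevelAux.cayC A)) := by
        rw [SublevelAux.cayA_cayC hAs]; exact hAs
      refine ⟨hXu, hXd.ne_zero, ?_⟩
      rw [SublevelAux.lyapV_eq_frobSq hskew hu, SublevelAux.cayA_cayC hAs]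
      exact hAl
  rw [hKey]
  -- S is compact
  have hSclosed : IsClosed S := by
    apply IsClosed.inter
    · exact isClosed_eq (Continuous.matrix_conjTranspose continuous_id) continuous_neg
    · exact isClosed_le SublevelAux.continuous_frobSq continuous_const
  set r : ℝ := Real.sqrt (max c 0) with hr
  have hcube : IsCompact {A : Matrix (Fin n) (Fin n) ℂ |
      ∀ i j, A i j ∈ Metric.closedBall (0 : ℂ) r} := by
    have h1 : IsCompact (Set.univ.pi fun _ : Fin n =>
        (Set.univ.pi fun _ : Fin n => Metric.closedBall (0 : ℂ) r)) :=
      isCompact_univ_pi fun _ =>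
        isCompact_univ_pi fun _ => isCompact_closedBall (0 : ℂ) r
    have h2 : {A : Matrix (Fin n) (Fin n) ℂ | ∀ i j, A i j ∈ Metric.closedBall (0 : ℂ) r}
        = Set.univ.pi fun _ : Fin n =>
          (Set.univ.pi fun _ : Fin n => Metric.closedBall (0 : ℂ) r) := by
      ext A
      constructor
      · intro h
        exact Set.mem_univ_pi.2 fun i => Set.mem_univ_pi.2 fun j => h i j
      · intro h i j
        exact Set.mem_univ_pi.1 (Set.mem_univ_pi.1 h i) j
    rw [h2]
    exact h1
  have hSsub : S ⊆ {A : Matrix (Fin n) (Fin n) ℂ |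
      ∀ i j, A i j ∈ Metric.closedBall (0 : ℂ) r} := by
    rintro A ⟨-, hAl⟩ i j
    rw [Metric.mem_closedBall, dist_zero_right]
    have hentry : Complex.normSq (A i j) ≤ max c 0 := by
      refine le_trans ?_ (le_trans hAl (le_max_left _ _))
      unfold SublevelAux.frobSq
      have h1 : Complex.normSq (A i j)
          ≤ ∑ l, Complex.normSq (A l j) :=
        Finset.single_le_sum (f := fun l => Complex.normSq (A l j))
          (fun l _ => Complex.normSq_nonneg _) (Finset.mem_univ i)
      refine le_trans h1 ?_
      exact Finset.single_le_sum (f := fun o => ∑ l, Complex.normSq (A l o))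
        (fun o _ => Finset.sum_nonneg fun l _ => Complex.normSq_nonneg _)
        (Finset.mem_univ j)
    calc ‖A i j‖ = Real.sqrt (Complex.normSq (A i j)) := by
          rw [Complex.norm_def]
      _ ≤ r := Real.sqrt_le_sqrt hentry
  have hScompact : IsCompact S := hcube.of_isClosed_subset hSclosed hSsub
  -- cayC is continuous on S
  have hcont : ContinuousOn SublevelAux.cayC S := by
    intro A hA
    have hu1 : IsUnit (1 - A).det := SublevelAux.isUnit_one_sub_det hA.1
    have hinv : ContinuousAt Inv.inv (1 - A) := by
      apply continuousAt_matrix_inv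
      have := NormedRing.inverse_continuousAt hu1.unit
      rwa [IsUnit.unit_spec] at this
    have : ContinuousAt SublevelAux.cayC A := by
      unfold SublevelAux.cayC
      exact (continuousAt_const.add continuousAt_id).mul
        (hinv.comp (continuousAt_const.sub continuousAt_id))
    exact this.continuousWithinAt
  exact hScompact.image_of_continuousOn hcont
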